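/- Let n ≥ 2, let c be a coloring of n strands, set t = t_{c_n}, let j₀ ∈ {1,…,μ} be any color and set s = t_{j₀}. Suppose A is an (n−1)×(n−1) matrix over Λ_μ and v is a row vector of length n−1 over Λ_μ such that (A, v) satisfies the boundary relation for c, and let M = [[A,0],[v,1]]. Let G'' be the n×n matrix equal to the identity except in its last 2×2 diagonal block, which equals [[1, 1 − s^{−1}],[0, s^{−1}t^{−1}]] (G'' is the reduced colored Gassner matrix of σ_n^{−2} viewed as a braid on n+1 strands with coloring (c_1,…,c_n,j₀)). Then (T^c_n − 1) · det(M·G'' − I_n) = [ (s^{−1}t^{−1} − 1)(T^c_n − 1) + (T^c_{n−1} − 1)(1 − s^{−1}) ] · det(A − I_{n−1}). (This is the determinant identity used to verify Jiang's axiom (R3) for the paper's invariant f.) -/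

import Mathlib

noncomputable section

open scoped BigOperators

/-- The multivariable Laurent polynomial ring `Λ_μ = ℤ[t₁^{±1},…,t_μ^{±1}]`,
realized as the group ℤ-algebra of `ℤ^μ`. -/
abbrev Lau (μ : ℕ) : Type := AddMonoidAlgebra ℤ (Fin μ →₀ ℤ)

instance (μ : ℕ) : IsDomain (Lau μ) := NoZeroDivisors.to_isDomain _

/-- The distinguished unit `t_i` of `Λ_μ`. -/
def tU {μ : ℕ} (i : Fin μ) : (Lau μ)ˣ where
  val := AddMonoidAlgebra.single (Finsupp.single i 1) 1
  inv := AddMonoidAlgebra.single (Finsupp.single i (-1)) 1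
  val_inv := by
    rw [AddMonoidAlgebra.single_mul_single, ← Finsupp.single_add]
    norm_num; rfl
  inv_val := by
    rw [AddMonoidAlgebra.single_mul_single, ← Finsupp.single_add]
    norm_num; rfl

/-- `T^c_i = t_{c_1} ⋯ t_{c_i}` (product of the first `i` values of the coloring,
zero-indexed: product over indices `k ≤ i`), as a unit of `Λ_μ`. -/
def TU {μ n : ℕ} (c : Fin n → Fin μ) (i : Fin n) : (Lau μ)ˣ :=
  ∏ k ∈ Finset.Iic i, tU (c k)

/-- The `n×n` matrix `[[A,0],[v,1]]` built from an `(n−1)×(n−1)` matrix `A`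
and a row vector `v` of length `n−1` (here `n = l+2`): the upper-left block is `A`,
the last column is `(0,…,0,1)ᵀ` and the last row begins with `v`. -/
def aug {μ l : ℕ} (A : Matrix (Fin (l+1)) (Fin (l+1)) (Lau μ)) (v : Fin (l+1) → Lau μ) :
    Matrix (Fin (l+2)) (Fin (l+2)) (Lau μ) := fun i j =>
  if hi : (i : ℕ) < l + 1 then
    if hj : (j : ℕ) < l + 1 then A ⟨i, hi⟩ ⟨j, hj⟩ else 0
  else
    if hj : (j : ℕ) < l + 1 then v ⟨j, hj⟩ else 1

/-- The pair `(A, v)` satisfies the boundary relation for the coloring `c`: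
for every column `j`, `∑_{i=1}^{n−1} (T^c_i − 1)(A − I)_{ij} = −(T^c_n − 1) v_j`. -/
def BoundaryRel {μ l : ℕ} (c : Fin (l+2) → Fin μ) (A : Matrix (Fin (l+1)) (Fin (l+1)) (Lau μ))
    (v : Fin (l+1) → Lau μ) : Prop :=
  ∀ j : Fin (l+1), ∑ i : Fin (l+1),
      ((TU c i.castSucc : Lau μ) - 1) * (A - 1) i j
    = -((TU c (Fin.last (l+1)) : Lau μ) - 1) * v j

/-- The `(l+2)×(l+2)` matrix equal to the identity except in its last `2×2`
diagonal block, which is `[[a,b],[c,d]]`. -/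
def last2Block {μ : ℕ} (l : ℕ) (a b c d : Lau μ) :
    Matrix (Fin (l+2)) (Fin (l+2)) (Lau μ) := fun i j =>
  if (i : ℕ) = l ∧ (j : ℕ) = l then a
  else if (i : ℕ) = l ∧ (j : ℕ) = l + 1 then b
  else if (i : ℕ) = l + 1 ∧ (j : ℕ) = l then c
  else if (i : ℕ) = l + 1 ∧ (j : ℕ) = l + 1 then d
  else if i = j then 1 else 0


section Helpers

set_option linter.unreachableTactic false
set_option linter.unusedTactic false

lemma mul_last2Block {μ l : ℕ} (M : Matrix (Fin (l+2)) (Fin (l+2)) (Lau μ)) (b d : Lau μ)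
    (i j : Fin (l+2)) :
    (M * last2Block l 1 b 0 d) i j =
      if (j : ℕ) = l + 1 then M i ⟨l, by omega⟩ * b + M i (Fin.last (l+1)) * d
      else M i j := by
  rw [Matrix.mul_apply]
  by_cases hj : (j : ℕ) = l + 1
  · rw [if_pos hj]
    have hk : ∀ k : Fin (l+2), last2Block l 1 b 0 d k j =
        (if k = (⟨l, by omega⟩ : Fin (l+2)) then b else 0) +
        (if k = Fin.last (l+1) then d else 0) := by
      intro k
      simp only [last2Block, Fin.ext_iff, Fin.val_last, hj]
      split_ifs <;> first | ring1 | (exfalso; omega) | (exfalso; simp_all)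
    simp only [hk, mul_add, Finset.sum_add_distrib, mul_ite, mul_zero,
      Finset.sum_ite_eq', Finset.mem_univ, if_true]
  · rw [if_neg hj]
    have hk : ∀ k : Fin (l+2), last2Block l 1 b 0 d k j =
        if k = j then 1 else 0 := by
      intro k
      simp only [last2Block, Fin.ext_iff, Fin.val_last]
      split_ifs <;> first | ring1 | (exfalso; omega) | (exfalso; simp_all)
    simp only [hk, mul_ite, mul_zero, mul_one, Finset.sum_ite_eq', Finset.mem_univ, if_true]

lemma aug_last {μ l : ℕ} (A : Matrix (Fin (l+1)) (Fin (l+1)) (Lau μ)) (v : Fin (l+1) → Lau μ)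
    (k : Fin (l+2)) :
    aug A v k (Fin.last (l+1)) = if k = Fin.last (l+1) then 1 else 0 := by
  have hl : ¬ (((Fin.last (l+1) : Fin (l+2)) : ℕ)) < l + 1 := by simp
  by_cases hk : (k : ℕ) < l + 1
  · rw [aug, dif_pos hk, dif_neg hl, if_neg (by rintro rfl; simp at hk)]
  · rw [aug, dif_neg hk, dif_neg hl, if_pos (Fin.ext (by simp; omega))]

lemma aug_castSucc {μ l : ℕ} (A : Matrix (Fin (l+1)) (Fin (l+1)) (Lau μ))
    (v : Fin (l+1) → Lau μ) (i j : Fin (l+1)) :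
    aug A v i.castSucc j.castSucc = A i j := by
  rw [aug, dif_pos (by simp; omega), dif_pos (by simp; omega)]
  congr 1 <;> exact Fin.ext (by simp)

lemma aug_last_row {μ l : ℕ} (A : Matrix (Fin (l+1)) (Fin (l+1)) (Lau μ))
    (v : Fin (l+1) → Lau μ) (j : Fin (l+1)) :
    aug A v (Fin.last (l+1)) j.castSucc = v j := by
  rw [aug, dif_neg (by simp), dif_pos (by simp; omega)]
  congr 1 <;> exact Fin.ext (by simp)

lemma key_row {μ l : ℕ} (c : Fin (l+2) → Fin μ) (A : Matrix (Fin (l+1)) (Fin (l+1)) (Lau μ))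
    (v : Fin (l+1) → Lau μ) (hb : BoundaryRel c A v) :
    ((TU c (Fin.last (l+1)) : Lau μ) - 1) * ((A - 1).updateRow (Fin.last l) v).det
      = -(((TU c ((Fin.last l).castSucc) : Lau μ) - 1) * (A - 1).det) := by
  have h1 : (((TU c (Fin.last (l+1)) : Lau μ) - 1) • v)
      = ∑ k : Fin (l+1),
          (fun k : Fin (l+1) => -((TU c k.castSucc : Lau μ) - 1)) k • (A - 1) k := by
    funext j
    simp only [Pi.smul_apply, smul_eq_mul, Finset.sum_apply]
    have h2 := hb j
    have h3 : ∑ k : Fin (l+1), -((TU c k.castSucc : Lau μ) - 1) * (A - 1) k j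
        = -∑ i : Fin (l+1), ((TU c i.castSucc : Lau μ) - 1) * (A - 1) i j := by
      rw [← Finset.sum_neg_distrib]
      exact Finset.sum_congr rfl fun i _ => by ring
    rw [h3, h2]; try ring
  rw [← Matrix.det_updateRow_smul, h1, Matrix.det_updateRow_sum]
  simp only [smul_eq_mul]; ring

end Helpers

/-- the determinant identity used to verify Jiang's axiom (R3). With
`t = t_{c_n}`, `s = t_{j₀}`, `M = [[A,0],[v,1]]` and `G''` the identity except for
the last `2×2` diagonal block `[[1, 1 − s⁻¹],[0, s⁻¹ t⁻¹]]`, if `(A,v)` satisfies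
the boundary relation for `c` then
`(T^c_n − 1) · det(M·G'' − I_n)
  = [(s⁻¹ t⁻¹ − 1)(T^c_n − 1) + (T^c_{n−1} − 1)(1 − s⁻¹)] · det(A − I_{n−1})`
(here `n = l + 2 ≥ 2`). -/
theorem stmt7 {μ l : ℕ} (c : Fin (l+2) → Fin μ) (j₀ : Fin μ)
    (A : Matrix (Fin (l+1)) (Fin (l+1)) (Lau μ)) (v : Fin (l+1) → Lau μ)
    (hb : BoundaryRel c A v) :
    ((TU c (Fin.last (l+1)) : Lau μ) - 1) *
        (aug A v *
            last2Block l 1 (1 - (((tU j₀)⁻¹ : (Lau μ)ˣ) : Lau μ)) 0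
              ((((tU j₀)⁻¹ : (Lau μ)ˣ) : Lau μ) *
                (((tU (c (Fin.last (l+1))))⁻¹ : (Lau μ)ˣ) : Lau μ)) - 1).det
      = (((((tU j₀)⁻¹ : (Lau μ)ˣ) : Lau μ) *
              (((tU (c (Fin.last (l+1))))⁻¹ : (Lau μ)ˣ) : Lau μ) - 1) *
            ((TU c (Fin.last (l+1)) : Lau μ) - 1)
          + ((TU c ((Fin.last l).castSucc) : Lau μ) - 1) *
              (1 - (((tU j₀)⁻¹ : (Lau μ)ˣ) : Lau μ))) *
          (A - 1).det := by
  classical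
  set s : Lau μ := (((tU j₀)⁻¹ : (Lau μ)ˣ) : Lau μ) with hs
  set t : Lau μ := (((tU (c (Fin.last (l+1))))⁻¹ : (Lau μ)ˣ) : Lau μ) with ht
  have hlfne : (⟨l, by omega⟩ : Fin (l+2)) ≠ Fin.last (l+1) := by
    simp [Fin.ext_iff]
  set N : Matrix (Fin (l+2)) (Fin (l+2)) (Lau μ) :=
    aug A v * last2Block l 1 (1 - s) 0 (s * t) - 1 with hN
  have hNe : ∀ k j : Fin (l+2), (j : ℕ) ≠ l + 1 →
      N k j = aug A v k j - (if k = j then 1 else 0) := by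
    intro k j hj
    rw [hN, Matrix.sub_apply, mul_last2Block, if_neg hj, Matrix.one_apply]
  have hNlast : ∀ k : Fin (l+2), N k (Fin.last (l+1)) =
      aug A v k ⟨l, by omega⟩ * (1 - s) + (if k = Fin.last (l+1) then 1 else 0) * (s * t)
        - (if k = Fin.last (l+1) then 1 else 0) := by
    intro k
    rw [hN, Matrix.sub_apply, mul_last2Block, if_pos (by simp), aug_last, Matrix.one_apply]
  set N' : Matrix (Fin (l+2)) (Fin (l+2)) (Lau μ) :=
    N.updateCol (Fin.last (l+1))
      (fun k => N k (Fin.last (l+1)) + (-(1 - s)) • N k ⟨l, by omega⟩) with hN'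
  have hdet : N'.det = N.det :=
    Matrix.det_updateCol_add_smul_self N hlfne.symm (-(1 - s))
  have hcol : ∀ k : Fin (l+2), N' k (Fin.last (l+1)) =
      if k = (⟨l, by omega⟩ : Fin (l+2)) then (1 - s)
      else if k = Fin.last (l+1) then s * t - 1 else 0 := by
    intro k
    rw [hN', Matrix.updateCol_self, hNlast k, hNe k ⟨l, by omega⟩ (by simp),
      smul_eq_mul]
    split_ifs <;>
      first
        | ring1
        | (exfalso; simp_all [Fin.ext_iff])
  have hcsne : ∀ j : Fin (l+1), j.castSucc ≠ Fin.last (l+1) := by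
    intro j h
    have := congrArg Fin.val h
    simp at this
    omega
  have hcsval : ∀ j : Fin (l+1), ((j.castSucc : Fin (l+2)) : ℕ) ≠ l + 1 := by
    intro j
    have := j.isLt
    simp
    omega
  have hentry : ∀ i j : Fin (l+1), N' i.castSucc j.castSucc = (A - 1) i j := by
    intro i j
    rw [hN', Matrix.updateCol_ne (hcsne j), hNe _ _ (hcsval j), aug_castSucc,
      Matrix.sub_apply, Matrix.one_apply]
    simp [Fin.castSucc_inj]
  have hvrow : ∀ j : Fin (l+1), N' (Fin.last (l+1)) j.castSucc = v j := by
    intro j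
    rw [hN', Matrix.updateCol_ne (hcsne j), hNe _ _ (hcsval j), aug_last_row,
      if_neg (fun h => (hcsne j) h.symm), sub_zero]
  have hminor1 : N'.submatrix (Fin.last (l+1)).succAbove (Fin.last (l+1)).succAbove
      = A - 1 := by
    ext i j
    rw [Matrix.submatrix_apply, Fin.succAbove_last, hentry]
  have hminor2 : N'.submatrix (⟨l, by omega⟩ : Fin (l+2)).succAbove (Fin.last (l+1)).succAbove
      = (A - 1).updateRow (Fin.last l) v := by
    ext i j
    rw [Matrix.submatrix_apply, Fin.succAbove_last]
    by_cases hi : i = Fin.last l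
    · subst hi
      have h1 : (⟨l, by omega⟩ : Fin (l+2)).succAbove (Fin.last l) = Fin.last (l+1) := by
        rw [Fin.succAbove_of_le_castSucc _ _ (by simp [Fin.le_def])]
        exact Fin.ext (by simp)
      rw [h1, hvrow, Matrix.updateRow_self]
    · have hi' : (i : ℕ) < l := by
        rcases Nat.lt_or_ge (i : ℕ) l with h | h
        · exact h
        · exact absurd (Fin.ext (by omega : (i : ℕ) = l)) hi
      have h1 : (⟨l, by omega⟩ : Fin (l+2)).succAbove i = i.castSucc :=
        Fin.succAbove_of_castSucc_lt _ _ (by simp [Fin.lt_def, hi'])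
      rw [h1, hentry, Matrix.updateRow_ne hi]
  have hexp := Matrix.det_succ_column N' (Fin.last (l+1))
  have hzero : ∀ i ∈ (Finset.univ : Finset (Fin (l+2))),
      i ∉ ({(⟨l, by omega⟩ : Fin (l+2)), Fin.last (l+1)} : Finset (Fin (l+2))) →
      (-1 : Lau μ) ^ ((i : ℕ) + ((Fin.last (l+1) : Fin (l+2)) : ℕ)) * N' i (Fin.last (l+1)) *
        (N'.submatrix i.succAbove (Fin.last (l+1)).succAbove).det = 0 := by
    intro i _ hi
    simp only [Finset.mem_insert, Finset.mem_singleton, not_or] at hi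
    rw [hcol i, if_neg hi.1, if_neg hi.2, mul_zero, zero_mul]
  have hsum : N'.det =
      (-1 : Lau μ) ^ (l + (l + 1)) * (1 - s) * ((A - 1).updateRow (Fin.last l) v).det
      + (-1 : Lau μ) ^ ((l + 1) + (l + 1)) * (s * t - 1) * (A - 1).det := by
    rw [hexp, ← Finset.sum_subset
        (Finset.subset_univ ({(⟨l, by omega⟩ : Fin (l+2)), Fin.last (l+1)} : Finset (Fin (l+2))))
        hzero, Finset.sum_pair hlfne, hcol, hcol, hminor1, hminor2]
    simp only [Fin.val_last]
    split_ifs <;>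
      first
        | ring1
        | (exfalso; simp_all [Fin.ext_iff])
  have hsign1 : ((-1 : Lau μ)) ^ (l + (l + 1)) = -1 :=
    Odd.neg_one_pow ⟨l, by omega⟩
  have hsign2 : ((-1 : Lau μ)) ^ ((l + 1) + (l + 1)) = 1 :=
    Even.neg_one_pow ⟨l + 1, by omega⟩
  have hNdet : N.det = -((1 - s) * ((A - 1).updateRow (Fin.last l) v).det)
      + (s * t - 1) * (A - 1).det := by
    rw [← hdet, hsum, hsign1, hsign2]; ring
  have hkey := key_row c A v hb
  linear_combination (((TU c (Fin.last (l+1)) : Lau μ)) - 1) * hNdet - (1 - s) * hkey
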